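/- Let (X,ψ) be a weighted space and (Y,‖·‖_Y) a Banach space. For every w ∈ 𝓑_ψ(X;Y), the tilted weight function ψ_w: X → (0,∞) defined by ψ_w(x) = ψ(x)/(1 + ‖w(x)‖_Y) is again an admissible weight function on X, i.e. every pre-image ψ_w^{-1}((0,R]) is compact for R > 0. -/

import Mathlib

open Filter Topology

/-- `f` belongs to `𝓑_ψ(X;Y)`, the closure of the bounded continuous maps `C⁰_b(X;Y)`
with respect to the weighted norm `‖f‖_{𝓑_ψ} = sup_x ‖f x‖ / ψ x`. -/
def MemBpsi {X : Type*} [TopologicalSpace X] {Y : Type*} [NormedAddCommGroup Y]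
    (ψ : X → ℝ) (f : X → Y) : Prop :=
  ∀ ε > (0 : ℝ), ∃ g : X → Y, Continuous g ∧ (∃ C : ℝ, ∀ x, ‖g x‖ ≤ C) ∧
    ∀ x, ‖f x - g x‖ ≤ ε * ψ x

/-- **(Lemma 3.8: tilted weights are admissible).**
Let `(X, ψ)` be a weighted space and `(Y, ‖·‖_Y)` a Banach space.  For every
`w ∈ 𝓑_ψ(X;Y)`, the tilted weight function `ψ_w(x) = ψ(x)/(1 + ‖w x‖)` is again an
admissible weight function on `X`: it is strictly positive, and every pre-image
`ψ_w⁻¹((0,R])` is compact for `R > 0`. -/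
theorem tilted_weight_admissible
    {X : Type*} [TopologicalSpace X] [T2Space X] [CompletelyRegularSpace X]
    {Y : Type*} [NormedAddCommGroup Y] [NormedSpace ℝ Y] [CompleteSpace Y]
    (ψ : X → ℝ) (hψpos : ∀ x, 0 < ψ x)
    (hψadm : ∀ R > 0, IsCompact {x : X | ψ x ≤ R})
    (w : X → Y) (hw : MemBpsi ψ w) :
    (∀ x, 0 < ψ x / (1 + ‖w x‖)) ∧
    (∀ R > 0, IsCompact {x : X | ψ x / (1 + ‖w x‖) ≤ R}) := by
  have hden : ∀ x, (0:ℝ) < 1 + ‖w x‖ := fun x => by positivity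
  refine ⟨fun x => div_pos (hψpos x) (hden x), fun R hR => ?_⟩
  -- reformulate the set
  have hset : {x : X | ψ x / (1 + ‖w x‖) ≤ R} = {x : X | ψ x ≤ R * (1 + ‖w x‖)} := by
    ext x
    simp only [Set.mem_setOf_eq, div_le_iff₀ (hden x)]
  rw [hset]
  -- ψ is lower semicontinuous
  have hψlsc : LowerSemicontinuous ψ := by
    rw [lowerSemicontinuous_iff_isClosed_preimage]
    intro r
    rcases le_or_gt r 0 with hr | hr
    · have : ψ ⁻¹' Set.Iic r = ∅ := by
        ext x; simp only [Set.mem_preimage, Set.mem_Iic, Set.mem_empty_iff_false, iff_false]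
        exact fun h => absurd (h.trans hr) (not_le.mpr (hψpos x))
      rw [this]; exact isClosed_empty
    · exact (hψadm r hr).isClosed
  -- a bound on the set: from one approximant with ε = 1/(2R)
  obtain ⟨g0, hg0c, ⟨C, hC⟩, hg0⟩ := hw (1 / (2 * R)) (by positivity)
  set C' : ℝ := max C 0 with hC'
  have hC'0 : 0 ≤ C' := le_max_right _ _
  set M : ℝ := 2 * R * (1 + C') with hM
  have hM0 : 0 < M := by positivity
  have hsub : {x : X | ψ x ≤ R * (1 + ‖w x‖)} ⊆ {x : X | ψ x ≤ M} := by
    intro x hx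
    simp only [Set.mem_setOf_eq] at hx ⊢
    have h1 : ‖w x‖ ≤ ‖g0 x‖ + ‖w x - g0 x‖ := by
      have := norm_add_le (g0 x) (w x - g0 x)
      simpa using this
    have h2 : ‖w x‖ ≤ C' + (1 / (2 * R)) * ψ x :=
      h1.trans (add_le_add ((hC x).trans (le_max_left _ _)) (hg0 x))
    have h3 : ψ x ≤ R * (1 + (C' + (1 / (2 * R)) * ψ x)) := by
      refine hx.trans ?_
      have := mul_le_mul_of_nonneg_left (add_le_add_left h2 1) hR.le
      linarith
    have hRne : R ≠ 0 := ne_of_gt hR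
    have h4 : R * ((1 / (2 * R)) * ψ x) = ψ x / 2 := by
      field_simp
    nlinarith [hψpos x]
  have hK : IsCompact {x : X | ψ x ≤ M} := hψadm M hM0
  set K : Set X := {x : X | ψ x ≤ M} with hKdef
  -- w is continuous on K as a uniform limit of continuous functions
  choose g hgc hgb hgw using fun n : ℕ => hw (1 / (n + 1)) (by positivity)
  have hwK : Continuous (fun x : K => w ↑x) := by
    have htu : TendstoUniformly (fun n (x : K) => g n ↑x) (fun x : K => w ↑x) atTop := by
      rw [Metric.tendstoUniformly_iff]
      intro ε hε
      obtain ⟨N, hN⟩ := exists_nat_gt (M / ε)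
      filter_upwards [eventually_ge_atTop N] with n hn x
      have hx : ψ ↑x ≤ M := x.2
      have h1 : dist (w ↑x) (g n ↑x) ≤ (1 / (n + 1)) * ψ ↑x := by
        rw [dist_eq_norm]; exact hgw n ↑x
      have hn1 : (0:ℝ) < n + 1 := by positivity
      have h2 : (1 / ((n:ℝ) + 1)) * ψ ↑x ≤ M / (n + 1) := by
        have := (hψpos ↑x).le
        rw [div_eq_mul_inv M, one_div, mul_comm]
        exact mul_le_mul_of_nonneg_right hx (by positivity)
      have h3 : M / ((n:ℝ) + 1) < ε := by
        rw [div_lt_iff₀ hn1]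
        have hNn : (M / ε : ℝ) < n + 1 := hN.trans_le (by exact_mod_cast Nat.le_succ_of_le hn)
        calc M = (M / ε) * ε := by field_simp
        _ < (n + 1) * ε := by
            exact mul_lt_mul_of_pos_right hNn hε
        _ = ε * (n + 1) := by ring
      exact lt_of_le_of_lt (h1.trans h2) h3
    exact htu.continuous (Eventually.of_forall fun n => (hgc n).comp continuous_subtype_val).frequently
  -- the set, viewed inside K, is closed
  have hKcomp : CompactSpace K := isCompact_iff_compactSpace.mp hK
  have hlsc : LowerSemicontinuous (fun x : K => ψ ↑x + -(R * (1 + ‖w ↑x‖))) := by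
    have h1 : LowerSemicontinuous (fun x : K => ψ ↑x) :=
      LowerSemicontinuous.comp hψlsc continuous_subtype_val
    have h2 : Continuous (fun x : K => -(R * (1 + ‖w ↑x‖))) := by
      exact (continuous_const.mul (continuous_const.add hwK.norm)).neg
    exact h1.add h2.lowerSemicontinuous
  have hclosed : IsClosed {x : K | ψ ↑x ≤ R * (1 + ‖w ↑x‖)} := by
    have := hlsc.isClosed_preimage 0
    convert this using 1
    ext x
    simp only [Set.mem_setOf_eq, Set.mem_preimage, Set.mem_Iic]
    constructor <;> intro h <;> linarith
  have hcomp : IsCompact ((↑) '' {x : K | ψ ↑x ≤ R * (1 + ‖w ↑x‖)} : Set X) :=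
    (hclosed.isCompact).image continuous_subtype_val
  convert hcomp using 1
  ext x
  simp only [Set.mem_image, Set.mem_setOf_eq]
  constructor
  · intro hx
    exact ⟨⟨x, hsub hx⟩, hx, rfl⟩
  · rintro ⟨⟨y, hy⟩, h1, rfl⟩
    exact h1
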